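/- For every n ≥ 2, consider the instance with actions {⊥, 1, ..., n−1}, f(⊥)=0, c(⊥)=0, f(i)=2^{i+1}/2^n, c(i)=(2^{i+1}−i−1)/2^n for i ∈ {1,...,n−1}, and inspection cost v(S)=|S|·n/2^n. Every deterministic incentive-compatible inspection scheme yields principal's utility at most 2/2^n, while the randomized incentive-compatible scheme suggesting action n−1 with α = 1 − n/2^n and inspecting {n−1} with probability 1/2 (∅ otherwise) yields principal's utility n/2^{n+1}. Hence the ratio between the optimal randomized and optimal deterministic inspection scheme utility is at least n/4. -/

import Mathlib

set_option maxHeartbeats 1600000 in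
theorem stmt11 (n : ℕ) (hn : 2 ≤ n) :
    let f : Fin n → ℝ := fun j => if (j : ℕ) = 0 then 0 else 2 ^ ((j : ℕ) + 1) / 2 ^ n
    let c : Fin n → ℝ := fun j =>
      if (j : ℕ) = 0 then 0 else (2 ^ ((j : ℕ) + 1) - (j : ℕ) - 1) / 2 ^ n
    let v : Finset (Fin n) → ℝ := fun S => (S.card : ℝ) * n / 2 ^ n
    let last : Fin n := ⟨n - 1, by omega⟩
    -- every deterministic IC inspection scheme yields utility at most 2/2^n
    (∀ (i : Fin n) (α : ℝ) (S : Finset (Fin n)), α ∈ Set.Icc (0 : ℝ) 1 →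
      (∀ j : Fin n,
        (if j = i then α * f i - c i
         else α * f j * (if i ∈ S ∨ j ∈ S then 0 else 1) - c j) ≤ α * f i - c i) →
      (1 - α) * f i - v S ≤ 2 / 2 ^ n)
    -- the randomized scheme (last, 1 - n/2^n, {inspect {last} w.p. 1/2, ∅ w.p. 1/2}) is IC
    ∧ (∀ j : Fin n,
        (if j = last then (1 - (n : ℝ) / 2 ^ n) * f last - c last
         else (1 - (n : ℝ) / 2 ^ n) * f j * (1 - 1/2) - c j)
        ≤ (1 - (n : ℝ) / 2 ^ n) * f last - c last)
    -- and yields principal's utility n/2^(n+1)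
    ∧ (1 - (1 - (n : ℝ) / 2 ^ n)) * f last - (1/2) * v {last} = (n : ℝ) / 2 ^ (n + 1)
    -- hence the randomized/deterministic gap is at least n/4
    ∧ (n : ℝ) / 2 ^ (n + 1) = ((n : ℝ) / 4) * (2 / 2 ^ n) := by
  intro f c v last
  have hA : (0:ℝ) < 2 ^ n := by positivity
  have hlast : (last : ℕ) = n - 1 := rfl
  have hlast0 : (last : ℕ) ≠ 0 := by simp [hlast]; omega
  have hflast : f last = 1 := by
    simp only [f, hlast0, if_false]
    rw [Nat.sub_add_cancel (by omega)]
    field_simp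
  have hclast : c last = (2^n - (n:ℝ) + 1 - 1) / 2^n := by
    simp only [c, hlast0, if_false]
    rw [Nat.sub_add_cancel (by omega), Nat.cast_sub (by omega)]
    push_cast
    ring_nf
  refine ⟨?_, ?_, ?_, ?_⟩
  · intro i α S hα hIC
    obtain ⟨hα0, hα1⟩ := hα
    by_cases hi0 : (i : ℕ) = 0
    · have hf : f i = 0 := by simp [f, hi0]
      have hv : 0 ≤ v S := by
        simp only [v]; positivity
      rw [hf]
      have h2 : (0:ℝ) ≤ 2 / 2^n := by positivity
      linarith
    · have hi1 : 1 ≤ (i:ℕ) := Nat.one_le_iff_ne_zero.2 hi0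
      have hin : (i:ℕ) < n := i.isLt
      have hfi : f i = 2 ^ ((i:ℕ)+1) / 2^n := by simp [f, hi0]
      have hci : c i = (2 ^ ((i:ℕ)+1) - ((i:ℕ):ℝ) - 1) / 2^n := by simp [c, hi0]
      have hvS : v S = (S.card:ℝ) * n / 2^n := rfl
      -- reduce to the key numerator inequality
      suffices key : (1-α) * 2 ^ ((i:ℕ)+1) - (S.card:ℝ) * n ≤ 2 by
        rw [hfi, hvS]
        have heq : (1-α) * (2 ^ ((i:ℕ)+1) / 2^n) - (S.card:ℝ) * n / 2^n
            = ((1-α) * 2 ^ ((i:ℕ)+1) - (S.card:ℝ) * n) / 2^n := by ring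
        rw [heq]
        gcongr
      -- IC against the null action j = 0
      have h0 : (1-α) * 2 ^ ((i:ℕ)+1) ≤ (i:ℕ) + 1 := by
        have h := hIC ⟨0, by omega⟩
        rw [if_neg (by intro he; exact hi0 (by rw [← he])) ] at h
        simp only [f, c, hfi, hci] at h
        norm_num at h
        rw [div_le_iff₀ hA] at h
        field_simp at h
        linarith
      have hn2 : (2:ℝ) ≤ (n:ℝ) := by exact_mod_cast hn
      have hcard0 : (0:ℝ) ≤ (S.card:ℝ) * n := mul_nonneg (Nat.cast_nonneg _) (Nat.cast_nonneg _)
      by_cases hiS : i ∈ S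
      · -- inspected: |S| ≥ 1 and small surplus
        have hc1 : (1:ℝ) ≤ (S.card:ℝ) := by
          exact_mod_cast Finset.card_pos.2 ⟨i, hiS⟩
        have hiN : ((i:ℕ):ℝ) + 1 ≤ (n:ℝ) := by exact_mod_cast hin
        nlinarith
      · by_cases hβ : (1-α) * 2 ^ (i:ℕ) ≤ 1
        · have h2 : (2:ℝ) ^ ((i:ℕ)+1) = 2 * 2 ^ (i:ℕ) := by rw [pow_succ]; ring
          nlinarith
        · push_neg at hβ
          classical
          set P : ℕ → Prop := fun k => k = 0 ∨ ∃ j : Fin n, (j:ℕ) = k ∧ j ∉ S with hP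
          set j0 := Nat.findGreatest P ((i:ℕ)-1) with hj0def
          have hj0le : j0 ≤ (i:ℕ) - 1 := Nat.findGreatest_le _
          have hPj0 : P j0 := Nat.findGreatest_spec (Nat.zero_le _) (Or.inl rfl)
          have hSub : ∀ k, j0 < k → k < (i:ℕ) → ∀ (h : k < n), (⟨k, h⟩ : Fin n) ∈ S := by
            intro k hk1 hk2 h
            by_contra hmem
            exact Nat.findGreatest_is_greatest hk1 (by omega)
              (Or.inr ⟨⟨k, h⟩, rfl, hmem⟩)
          have hcard : (i:ℕ) - 1 - j0 ≤ S.card := by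
            have hle : (Finset.Ioo j0 (i:ℕ)).card ≤ S.card := by
              apply Finset.card_le_card_of_injOn
                (fun k => (⟨k % n, Nat.mod_lt _ (by omega)⟩ : Fin n))
              · intro k hk
                rw [Finset.mem_coe, Finset.mem_Ioo] at hk
                rw [Finset.mem_coe]
                have hkn : k < n := by omega
                have hmod : k % n = k := Nat.mod_eq_of_lt hkn
                have := hSub k hk.1 hk.2 hkn
                convert this using 2
              · intro a ha b hb hab
                simp only [Finset.coe_Ioo, Set.mem_Ioo] at ha hb
                have h1 : a % n = b % n := congrArg Fin.val hab
                rw [Nat.mod_eq_of_lt (by omega), Nat.mod_eq_of_lt (by omega)] at h1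
                exact h1
            rw [Nat.card_Ioo] at hle
            omega
          clear_value j0
          have hcR : ((i:ℕ):ℝ) - 1 - (j0:ℝ) ≤ (S.card:ℝ) := by
            have h2 : (((i:ℕ) - 1 - j0 : ℕ):ℝ) ≤ (S.card:ℝ) := by exact_mod_cast hcard
            rw [Nat.cast_sub (by omega), Nat.cast_sub hi1, Nat.cast_one] at h2
            exact h2
          have h1α : (0:ℝ) ≤ 1 - α := by linarith
          have h2i : (2:ℝ) ^ ((i:ℕ)+1) = 2 * 2 ^ (i:ℕ) := by rw [pow_succ]; ring
          by_cases hj00 : j0 = 0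
          · -- all of 1..i-1 inspected
            have hiR : (1:ℝ) ≤ ((i:ℕ):ℝ) := by exact_mod_cast hi1
            rw [hj00] at hcR
            norm_num at hcR
            nlinarith [mul_le_mul_of_nonneg_right hcR (by linarith : (0:ℝ) ≤ (n:ℝ)),
              mul_nonneg (by linarith : (0:ℝ) ≤ ((i:ℕ):ℝ) - 1) (by linarith : (0:ℝ) ≤ (n:ℝ) - 2)]
          · obtain ⟨jf, hjf, hjfS⟩ := hPj0.resolve_left hj00
            have hjfne : jf ≠ i := by
              intro h'
              rw [h'] at hjf
              omega
            have h := hIC jf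
            rw [if_neg hjfne, if_neg (by simp [hiS, hjfS])] at h
            have hfjf : f jf = 2 ^ (j0+1) / 2^n := by
              simp [f, hjf, hj00]
            have hcjf : c jf = (2 ^ (j0+1) - (j0:ℝ) - 1) / 2^n := by
              simp [c, hjf, hj00]
            rw [hfjf, hcjf, hfi, hci, mul_one] at h
            have hkey2 : (1-α) * (2 ^ ((i:ℕ)+1) - 2 ^ (j0+1)) ≤ ((i:ℕ):ℝ) - (j0:ℝ) := by
              have hm := mul_le_mul_of_nonneg_right h hA.le
              have e1 : (α * (2 ^ (j0+1) / 2^n) - (2 ^ (j0+1) - (j0:ℝ) - 1) / 2^n) * 2^n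
                  = α * 2 ^ (j0+1) - (2 ^ (j0+1) - (j0:ℝ) - 1) := by
                field_simp
              have e2 : (α * (2 ^ ((i:ℕ)+1) / 2^n) - (2 ^ ((i:ℕ)+1) - ((i:ℕ):ℝ) - 1) / 2^n) * 2^n
                  = α * 2 ^ ((i:ℕ)+1) - (2 ^ ((i:ℕ)+1) - ((i:ℕ):ℝ) - 1) := by
                field_simp
              rw [e1, e2] at hm
              linarith
            have hpowle : (2:ℝ) ^ (j0+1) ≤ 2 ^ (i:ℕ) := by
              apply pow_le_pow_right₀ (by norm_num)
              omega
            have hexp : (1-α) * (2 ^ ((i:ℕ)+1) - 2 ^ (j0+1))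
                = 2*((1-α) * 2 ^ (i:ℕ)) - (1-α) * 2 ^ (j0+1) := by rw [h2i]; ring
            rw [hexp] at hkey2
            have hB : (1-α) * 2 ^ (i:ℕ) ≤ ((i:ℕ):ℝ) - (j0:ℝ) := by
              linarith [mul_le_mul_of_nonneg_left hpowle h1α]
            have hc2 : (1-α) * 2 ^ (i:ℕ) - 1 ≤ (S.card:ℝ) := by linarith
            have e1 : ((S.card:ℝ) - ((1-α) * 2 ^ (i:ℕ) - 1)) * (n:ℝ) ≥ 0 :=
              mul_nonneg (by linarith) (by linarith)
            have e2 : ((1-α) * 2 ^ (i:ℕ) - 1) * ((n:ℝ) - 2) ≥ 0 :=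
              mul_nonneg (by linarith) (by linarith)
            rw [h2i]
            linarith [e1, e2]
  · -- randomized IC
    intro j
    by_cases hj : j = last
    · rw [if_pos hj]
    · rw [if_neg hj]
      have hrhs : (1 - (n : ℝ) / 2 ^ n) * f last - c last = 0 := by
        rw [hflast, hclast]; field_simp; ring
      rw [hrhs]
      by_cases hj0 : (j : ℕ) = 0
      · simp [f, c, hj0]
      · have hj1 : 1 ≤ (j : ℕ) := Nat.one_le_iff_ne_zero.2 hj0
        have hfj : f j = 2 ^ ((j:ℕ)+1) / 2^n := by simp [f, hj0]
        have hcj : c j = (2 ^ ((j:ℕ)+1) - ((j:ℕ):ℝ) - 1) / 2^n := by simp [c, hj0]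
        rw [hfj, hcj]
        have hαle : (n : ℝ) / 2^n ≥ 0 := by positivity
        have hα1 : (1 : ℝ) - (n:ℝ)/2^n ≤ 1 := by linarith
        have hpow : ((j:ℕ):ℝ) + 1 ≤ 2 ^ (j:ℕ) := by
          have := (Nat.lt_two_pow_self (n := (j:ℕ)))
          exact_mod_cast this
        have h2 : (2:ℝ) ^ ((j:ℕ)+1) = 2 * 2 ^ (j:ℕ) := by rw [pow_succ]; ring
        have hp : (0:ℝ) < 2 ^ (j:ℕ) := by positivity
        have heq : (1 - (n:ℝ)/2^n) * (2^((j:ℕ)+1)/2^n) * (1 - 1/2) - (2^((j:ℕ)+1) - ((j:ℕ):ℝ) - 1)/2^n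
            = ((1 - (n:ℝ)/2^n) * 2^((j:ℕ)+1) * (1/2) - (2^((j:ℕ)+1) - ((j:ℕ):ℝ) - 1))/2^n := by ring
        rw [heq]
        apply div_nonpos_of_nonpos_of_nonneg _ hA.le
        nlinarith [mul_le_mul_of_nonneg_right hα1 hp.le]
  · rw [hflast]
    have hv : v {last} = (n:ℝ) / 2^n := by simp [v]
    rw [hv]
    field_simp
    ring
  · field_simp
    ring
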